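/- Let n ≥ 2 and let F : ℝ^n → ℝ be a nonnegative bounded Borel function that is S_n-invariant, invariant under diagonal translations, and supported in {x : max_{i,j}|x_i − x_j| ≤ α}. Define on the torus group T(N) of diagonal unitary N×N matrices the random variable Z[n,F,T(N)](A) = (1/N) Σ_{T ⊆ {1,…,N}, #T = n} F((N/2π)·pr_T(X(A))), where X(A) is the angle vector of A and pr_T the projection to the coordinates in T. Then for all N ≥ 2, |E(Z[n,F,T(N)])| ≤ ‖F‖_sup · α^{n−1}/(n−1)!. -/

import Mathlib

open MeasureTheory
open scoped ENNReal

/-- The Haar probability measure on the torus `T(N)` of diagonal unitary matrices,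
realized as normalized Lebesgue measure on the cube of angle vectors `[0,2π)^N`. -/
noncomputable def haarTN (N : ℕ) : Measure (Fin N → ℝ) :=
  (ENNReal.ofReal ((2 * Real.pi) ^ N))⁻¹ •
    volume.restrict (Set.univ.pi fun _ => Set.Ico (0 : ℝ) (2 * Real.pi))

/-- The random variable `Z[n,F,T(N)](A) = (1/N) ∑_{T ⊆ {1,…,N}, #T = n} F((N/2π)·pr_T(X(A)))`,
where `X(A)` is the angle vector of `A` and `pr_T` the projection to the coordinates in
`T` (taken in increasing order; `F` is symmetric so the order is irrelevant). -/
noncomputable def Zrv (n N : ℕ) (F : (Fin n → ℝ) → ℝ) (A : Fin N → ℝ) : ℝ :=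
  (1 / (N : ℝ)) *
    ∑ T ∈ (Finset.powersetCard n (Finset.univ : Finset (Fin N))).attach,
      F fun i => ((N : ℝ) / (2 * Real.pi)) *
        A ((T.1.orderIsoOfFin (Finset.mem_powersetCard.mp T.2).2) i)


lemma pi_smul_restrict (m : ℕ) (c : ℝ≥0∞) (hc : c ≠ ∞) (L : ℝ) :
    (Measure.pi fun _ : Fin m => c • volume.restrict (Set.Ico (0:ℝ) L)) =
      c ^ m • volume.restrict (Set.univ.pi fun _ : Fin m => Set.Ico (0:ℝ) L) := by
  haveI : IsFiniteMeasure (c • volume.restrict (Set.Ico (0:ℝ) L)) := by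
    constructor
    simp only [Measure.smul_apply, smul_eq_mul]
    exact ENNReal.mul_lt_top hc.lt_top (measure_lt_top _ _)
  haveI : SigmaFinite (c • volume.restrict (Set.Ico (0:ℝ) L)) := inferInstance
  haveI : Fin m → SigmaFinite (c • volume.restrict (Set.Ico (0:ℝ) L)) := fun _ => inferInstance

  apply Measure.pi_eq
  intro s hs
  rw [Measure.smul_apply, Measure.restrict_apply (MeasurableSet.univ_pi hs)]
  have : (Set.univ.pi s) ∩ (Set.univ.pi fun _ : Fin m => Set.Ico (0:ℝ) L)
      = Set.univ.pi fun i => s i ∩ Set.Ico (0:ℝ) L := by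
    rw [← Set.pi_inter_distrib]
  rw [this, volume_pi_pi]
  simp only [Measure.smul_apply, Measure.restrict_apply (hs _), smul_eq_mul]
  rw [Finset.prod_mul_distrib, Finset.prod_const, Finset.card_univ, Fintype.card_fin]


lemma map_comp_pi {n N : ℕ} (e : Fin n → Fin N) (he : Function.Injective e)
    (ν : Measure ℝ) [IsProbabilityMeasure ν] :
    Measure.map (fun A : Fin N → ℝ => A ∘ e) (Measure.pi fun _ : Fin N => ν) =
      Measure.pi fun _ : Fin n => ν := by
  symm
  apply Measure.pi_eq
  intro s hs
  have hmeas : Measurable (fun A : Fin N → ℝ => A ∘ e) :=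
    measurable_pi_lambda _ fun i => measurable_pi_apply (e i)
  rw [Measure.map_apply hmeas (MeasurableSet.univ_pi hs)]
  classical
  set t : Fin N → Set ℝ := fun j => if h : ∃ i, e i = j then s h.choose else Set.univ with ht
  have hpre : (fun A : Fin N → ℝ => A ∘ e) ⁻¹' (Set.univ.pi s) = Set.univ.pi t := by
    ext A
    simp only [Set.mem_preimage, Set.mem_pi, Set.mem_univ, forall_true_left, Function.comp]
    constructor
    · intro h j
      by_cases hj : ∃ i, e i = j
      · obtain ⟨i, rfl⟩ := hj
        have hj' : ∃ i', e i' = e i := ⟨i, rfl⟩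
        simp only [ht, dif_pos hj']
        have hc : hj'.choose = i := he hj'.choose_spec
        rw [hc]
        exact h i
      · simp [ht, dif_neg hj]
    · intro h i
      have := h (e i)
      have hj : ∃ i', e i' = e i := ⟨i, rfl⟩
      simp only [ht, dif_pos hj] at this
      have hc : hj.choose = i := he hj.choose_spec
      rwa [hc] at this
  rw [hpre, Measure.pi_pi]
  have h1 : ∏ j : Fin N, ν (t j) = ∏ j ∈ Finset.univ.image e, ν (t j) := by
    symm
    apply Finset.prod_subset (Finset.subset_univ _)
    intro j _ hj
    have : ¬ ∃ i, e i = j := by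
      intro ⟨i, hi⟩; exact hj (Finset.mem_image.mpr ⟨i, Finset.mem_univ _, hi⟩)
    simp [ht, dif_neg this]
  rw [h1, Finset.prod_image (fun i _ j _ h => he h)]
  apply Finset.prod_congr rfl
  intro i _
  have hj : ∃ i', e i' = e i := ⟨i, rfl⟩
  simp only [ht, dif_pos hj]
  have hc : hj.choose = i := he hj.choose_spec
  rw [hc]


lemma vol_eval_Ico {ι : Type*} [Fintype ι] (j : ι) (hI : ∀ i : ι, i = j) (L : ℝ) :
    (volume : Measure (ι → ℝ)) {t | t j ∈ Set.Ico 0 L} = ENNReal.ofReal L := by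
  have hseteq : {t : ι → ℝ | t j ∈ Set.Ico 0 L} = Set.univ.pi fun _ => Set.Ico (0:ℝ) L := by
    ext t
    simp only [Set.mem_setOf_eq, Set.mem_univ_pi]
    exact ⟨fun h i => (hI i).symm ▸ h, fun h => h j⟩
  rw [hseteq, volume_pi_pi, Finset.prod_const, Finset.card_univ,
    Fintype.card_eq_one_iff.mpr ⟨j, hI⟩, Real.volume_Ico, sub_zero, pow_one]

lemma slab_vol_bound (n : ℕ) (k : Fin n) (β L : ℝ) :
    volume {x : Fin n → ℝ | x k ∈ Set.Ico 0 L ∧ ∀ i, i ≠ k → x i ∈ Set.Icc (x k) (x k + β)}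
      ≤ ENNReal.ofReal L * ENNReal.ofReal β ^ (n - 1) := by
  classical
  haveI : Unique {i : Fin n // i = k} := ⟨⟨⟨k, rfl⟩⟩, by rintro ⟨a, rfl⟩; rfl⟩
  set E : Set (({i : Fin n // i = k} → ℝ) × ({i : Fin n // ¬ i = k} → ℝ)) :=
    {p | p.1 ⟨k, rfl⟩ ∈ Set.Ico 0 L ∧
      ∀ j : {i : Fin n // ¬ i = k}, p.2 j ∈ Set.Icc (p.1 ⟨k, rfl⟩) (p.1 ⟨k, rfl⟩ + β)} with hE
  have hEmeas : MeasurableSet E := by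
    have hEeq : E = {p : ({i : Fin n // i = k} → ℝ) × ({i : Fin n // ¬ i = k} → ℝ) |
        p.1 ⟨k, rfl⟩ ∈ Set.Ico 0 L} ∩
        ⋂ j : {i : Fin n // ¬ i = k}, ({p | p.1 ⟨k, rfl⟩ ≤ p.2 j} ∩ {p | p.2 j ≤ p.1 ⟨k, rfl⟩ + β}) := by
      ext p
      simp only [hE, Set.mem_setOf_eq, Set.mem_inter_iff, Set.mem_iInter, Set.mem_Icc]
    rw [hEeq]
    refine MeasurableSet.inter
      (measurable_fst.eval measurableSet_Ico)
      (MeasurableSet.iInter fun j => MeasurableSet.inter ?_ ?_)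
    · exact measurableSet_le measurable_fst.eval measurable_snd.eval
    · exact measurableSet_le measurable_snd.eval (by fun_prop)
  have hpre : (MeasurableEquiv.piEquivPiSubtypeProd (fun _ : Fin n => ℝ) (· = k)) ⁻¹' E =
      {x : Fin n → ℝ | x k ∈ Set.Ico 0 L ∧ ∀ i, i ≠ k → x i ∈ Set.Icc (x k) (x k + β)} := by
    ext x
    simp only [MeasurableEquiv.piEquivPiSubtypeProd, Equiv.piEquivPiSubtypeProd,
      Set.mem_preimage, Set.mem_setOf_eq, MeasurableEquiv.coe_mk, Equiv.coe_fn_mk]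
    constructor
    · rintro ⟨h1, h2⟩
      exact ⟨h1, fun i hi => h2 ⟨i, hi⟩⟩
    · rintro ⟨h1, h2⟩
      exact ⟨h1, fun j => h2 j.1 j.2⟩
  rw [← hpre,
    (MeasureTheory.volume_preserving_piEquivPiSubtypeProd (fun _ : Fin n => ℝ) (· = k)).measure_preimage
      hEmeas.nullMeasurableSet]
  rw [Measure.volume_eq_prod, Measure.prod_apply hEmeas]
  have hslice : ∀ t : {i : Fin n // i = k} → ℝ,
      volume (Prod.mk t ⁻¹' E) =
        Set.indicator {t : {i : Fin n // i = k} → ℝ | t ⟨k, rfl⟩ ∈ Set.Ico 0 L}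
          (fun _ => ENNReal.ofReal β ^ (n - 1)) t := by
    intro t
    by_cases ht : t ⟨k, rfl⟩ ∈ Set.Ico 0 L
    · have : Prod.mk t ⁻¹' E =
          Set.univ.pi fun _ : {i : Fin n // ¬ i = k} =>
            Set.Icc (t ⟨k, rfl⟩) (t ⟨k, rfl⟩ + β) := by
        ext y
        simp only [hE, Set.mem_preimage, Set.mem_setOf_eq, Set.mem_univ_pi]
        exact ⟨fun h => h.2, fun h => ⟨ht, h⟩⟩
      rw [this, volume_pi_pi]
      simp only [Real.volume_Icc, add_sub_cancel_left]
      rw [Finset.prod_const, Finset.card_univ, Fintype.card_subtype_compl,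
        Fintype.card_subtype_eq, Fintype.card_fin]
      exact (Set.indicator_of_mem
        (show t ∈ {t : {i : Fin n // i = k} → ℝ | t ⟨k, rfl⟩ ∈ Set.Ico 0 L} from ht)
        (fun _ => ENNReal.ofReal β ^ (n - 1))).symm
    · have : Prod.mk t ⁻¹' E = ∅ := by
        rw [Set.eq_empty_iff_forall_notMem]
        intro y hy
        exact ht hy.1
      rw [this, measure_empty]
      exact (Set.indicator_of_notMem
        (show t ∉ {t : {i : Fin n // i = k} → ℝ | t ⟨k, rfl⟩ ∈ Set.Ico 0 L} from ht)
        (fun _ => ENNReal.ofReal β ^ (n - 1))).symm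
  rw [lintegral_congr hslice]
  have hset : MeasurableSet {t : {i : Fin n // i = k} → ℝ | t ⟨k, rfl⟩ ∈ Set.Ico 0 L} :=
    measurable_pi_apply _ measurableSet_Ico
  rw [lintegral_indicator hset, setLIntegral_const]
  rw [mul_comm]
  exact mul_le_mul_left
    (@vol_eval_Ico {x : Fin n // x = k} (Subtype.fintype fun x => x = k) ⟨k, rfl⟩
      (fun i => Subtype.ext i.2) L).le _

lemma cube_S_vol (n : ℕ) (hn : 1 ≤ n) (β L : ℝ) :
    volume ({x : Fin n → ℝ | ∀ i j, |x i - x j| ≤ β} ∩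
        Set.univ.pi fun _ => Set.Ico (0:ℝ) L)
      ≤ n * (ENNReal.ofReal L * ENNReal.ofReal β ^ (n - 1)) := by
  haveI : Nonempty (Fin n) := ⟨⟨0, hn⟩⟩
  set B : Fin n → Set (Fin n → ℝ) := fun k =>
    {x | x k ∈ Set.Ico 0 L ∧ ∀ i, i ≠ k → x i ∈ Set.Icc (x k) (x k + β)} with hB
  have hsub : ({x : Fin n → ℝ | ∀ i j, |x i - x j| ≤ β} ∩
      Set.univ.pi fun _ => Set.Ico (0:ℝ) L) ⊆ ⋃ k, B k := by
    rintro x ⟨hS, hcube⟩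
    obtain ⟨k, -, hk⟩ := Finset.exists_min_image Finset.univ x Finset.univ_nonempty
    refine Set.mem_iUnion.mpr ⟨k, hcube k (Set.mem_univ k), fun i _ => ?_⟩
    refine ⟨hk i (Finset.mem_univ i), ?_⟩
    have h1 : x i - x k ≤ |x i - x k| := le_abs_self _
    have h2 := hS i k
    linarith
  calc volume ({x : Fin n → ℝ | ∀ i j, |x i - x j| ≤ β} ∩
        Set.univ.pi fun _ => Set.Ico (0:ℝ) L)
      ≤ volume (⋃ k, B k) := measure_mono hsub
    _ ≤ ∑' k, volume (B k) := measure_iUnion_le _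
    _ = ∑ k, volume (B k) := tsum_fintype _
    _ ≤ ∑ _k : Fin n, (ENNReal.ofReal L * ENNReal.ofReal β ^ (n - 1)) :=
        Finset.sum_le_sum fun k _ => slab_vol_bound n k β L
    _ = n * (ENNReal.ofReal L * ENNReal.ofReal β ^ (n - 1)) := by
        rw [Finset.sum_const, Finset.card_univ, Fintype.card_fin, nsmul_eq_mul]

lemma integral_bound (n : ℕ) (hn : 1 ≤ n) (G : (Fin n → ℝ) → ℝ) (hG : Measurable G)
    (hGpos : ∀ x, 0 ≤ G x) (C : ℝ) (hC0 : 0 ≤ C) (hGC : ∀ x, G x ≤ C)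
    (β L : ℝ) (hβ : 0 < β) (hL : 0 < L)
    (hGsupp : ∀ x : Fin n → ℝ, (∃ i j, β < |x i - x j|) → G x = 0) :
    ∫ y, G y ∂(Measure.pi fun _ : Fin n =>
        (ENNReal.ofReal L)⁻¹ • volume.restrict (Set.Ico (0:ℝ) L))
      ≤ C * n * β ^ (n - 1) / L ^ (n - 1) := by
  have hLne : ENNReal.ofReal L ≠ 0 := by
    simp [ENNReal.ofReal_eq_zero, not_le, hL]
  have hcne : (ENNReal.ofReal L)⁻¹ ≠ ∞ := ENNReal.inv_ne_top.mpr hLne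
  rw [pi_smul_restrict n _ hcne L, integral_smul_measure]
  set cube := Set.univ.pi fun _ : Fin n => Set.Ico (0:ℝ) L with hcube
  set μc := volume.restrict cube with hμc
  have hcubemeas : MeasurableSet cube :=
    MeasurableSet.univ_pi fun _ => measurableSet_Ico
  haveI : IsFiniteMeasure μc := by
    constructor
    rw [hμc, Measure.restrict_apply_univ, hcube, volume_pi_pi]
    simp only [Real.volume_Ico, sub_zero]
    refine ENNReal.prod_lt_top fun i _ => ?_
    simp [Real.volume_Ico]
  set Sset : Set (Fin n → ℝ) := {x | ∀ i j, |x i - x j| ≤ β} with hSset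
  have hSmeas : MeasurableSet Sset := by
    have : Sset = ⋂ i, ⋂ j, {x : Fin n → ℝ | |x i - x j| ≤ β} := by
      ext x; simp [hSset, Set.mem_iInter]
    rw [this]
    exact MeasurableSet.iInter fun i => MeasurableSet.iInter fun j =>
      measurableSet_le ((measurable_pi_apply i).sub (measurable_pi_apply j)).abs
        measurable_const
  have hGle : ∀ x, G x ≤ Sset.indicator (fun _ => C) x := by
    intro x
    by_cases hx : x ∈ Sset
    · rw [Set.indicator_of_mem hx]; exact hGC x
    · rw [Set.indicator_of_notMem hx]
      have : ∃ i j, β < |x i - x j| := by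
        simp only [hSset, Set.mem_setOf_eq, not_forall, not_le] at hx
        exact hx
      exact (hGsupp x this).le
  have hGint : Integrable G μc :=
    Integrable.mono' (integrable_const C) hG.aestronglyMeasurable
      (Filter.Eventually.of_forall fun x => by
        rw [Real.norm_eq_abs, abs_of_nonneg (hGpos x)]; exact hGC x)
  have hIndint : Integrable (Sset.indicator fun _ => C) μc :=
    (integrable_const C).indicator hSmeas
  have h1 : ∫ y, G y ∂μc ≤ C * (μc Sset).toReal := by
    calc ∫ y, G y ∂μc ≤ ∫ y, Sset.indicator (fun _ => C) y ∂μc :=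
          integral_mono hGint hIndint hGle
      _ = (μc Sset).toReal • C := integral_indicator_const C hSmeas
      _ = C * (μc Sset).toReal := by rw [smul_eq_mul, mul_comm]
  have h2 : (μc Sset).toReal ≤ n * (L * β ^ (n - 1)) := by
    have hle : μc Sset ≤ (n : ℝ≥0∞) * (ENNReal.ofReal L * ENNReal.ofReal β ^ (n - 1)) := by
      rw [hμc, Measure.restrict_apply hSmeas]
      exact cube_S_vol n hn β L
    have hne : (n : ℝ≥0∞) * (ENNReal.ofReal L * ENNReal.ofReal β ^ (n - 1)) ≠ ∞ :=
      ENNReal.mul_ne_top (ENNReal.natCast_ne_top n)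
        (ENNReal.mul_ne_top ENNReal.ofReal_ne_top (ENNReal.pow_ne_top ENNReal.ofReal_ne_top))
    calc (μc Sset).toReal
        ≤ ((n : ℝ≥0∞) * (ENNReal.ofReal L * ENNReal.ofReal β ^ (n - 1))).toReal :=
          ENNReal.toReal_mono hne hle
      _ = n * (L * β ^ (n - 1)) := by
          rw [ENNReal.toReal_mul, ENNReal.toReal_mul, ENNReal.toReal_pow,
            ENNReal.toReal_ofReal hL.le, ENNReal.toReal_ofReal hβ.le]
          simp
  have hscal : (((ENNReal.ofReal L)⁻¹ ^ n).toReal) = (L ^ n)⁻¹ := by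
    rw [ENNReal.toReal_pow, ENNReal.toReal_inv, ENNReal.toReal_ofReal hL.le, inv_pow]
  rw [hscal, smul_eq_mul]
  have hint_nonneg : (0:ℝ) ≤ (L ^ n)⁻¹ := by positivity
  calc (L ^ n)⁻¹ * ∫ y, G y ∂μc
      ≤ (L ^ n)⁻¹ * (C * (n * (L * β ^ (n - 1)))) := by
        apply mul_le_mul_of_nonneg_left _ hint_nonneg
        calc ∫ y, G y ∂μc ≤ C * (μc Sset).toReal := h1
          _ ≤ C * (n * (L * β ^ (n - 1))) := by
              apply mul_le_mul_of_nonneg_left h2 hC0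
    _ = C * n * β ^ (n - 1) / L ^ (n - 1) := by
        have hn' : L ^ n = L ^ (n - 1) * L := by
          rw [← pow_succ, Nat.sub_add_cancel hn]
        rw [hn']
        field_simp


/-- **Expectation bound for `Z[n,F,T(N)]`.**  Let `n ≥ 2` and let `F : ℝⁿ → ℝ` be a
nonnegative bounded Borel function, `S_n`-invariant, invariant under diagonal
translations, and supported in `{x : max_{i,j}|x_i - x_j| ≤ α}`.  Then for all `N ≥ 2`,
`|E(Z[n,F,T(N)])| ≤ ‖F‖_sup · α^{n-1}/(n-1)!`. -/
theorem Z_expectation_bound (n : ℕ) (hn : 2 ≤ n) (α : ℝ) (hα : 0 < α)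
    (F : (Fin n → ℝ) → ℝ) (hFmeas : Measurable F) (hFpos : ∀ x, 0 ≤ F x)
    (C : ℝ) (hC : ∀ x, F x ≤ C)
    (hsym : ∀ (σ : Equiv.Perm (Fin n)) (x : Fin n → ℝ), F (x ∘ σ) = F x)
    (htrans : ∀ (t : ℝ) (x : Fin n → ℝ), F (fun i => x i + t) = F x)
    (hsupp : ∀ x : Fin n → ℝ, (∃ i j, α < |x i - x j|) → F x = 0) :
    ∀ N : ℕ, 2 ≤ N →
      |∫ A, Zrv n N F A ∂(haarTN N)| ≤ C * α ^ (n - 1) / (Nat.factorial (n - 1)) := by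
  intro N hN
  have hπ : (0:ℝ) < 2 * Real.pi := by positivity
  have hNpos : (0:ℝ) < N := by exact_mod_cast (by omega : 0 < N)
  have hC0 : 0 ≤ C := le_trans (hFpos 0) (hC 0)
  have hπne : ENNReal.ofReal (2 * Real.pi) ≠ 0 := by
    simp [ENNReal.ofReal_eq_zero, not_le, hπ, Real.pi_pos]
  have hcne : (ENNReal.ofReal (2 * Real.pi))⁻¹ ≠ ∞ := ENNReal.inv_ne_top.mpr hπne
  set ν : Measure ℝ :=
    (ENNReal.ofReal (2 * Real.pi))⁻¹ • volume.restrict (Set.Ico 0 (2 * Real.pi)) with hν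
  haveI : IsProbabilityMeasure ν := by
    constructor
    rw [hν, Measure.smul_apply, Measure.restrict_apply_univ, Real.volume_Ico, sub_zero,
      smul_eq_mul]
    exact ENNReal.inv_mul_cancel hπne ENNReal.ofReal_ne_top
  have hhaar : haarTN N = Measure.pi (fun _ : Fin N => ν) := by
    rw [pi_smul_restrict N _ hcne (2 * Real.pi), haarTN,
      ENNReal.ofReal_pow hπ.le, ENNReal.inv_pow]
  set β : ℝ := 2 * Real.pi * α / N with hβ_def
  have hβ : 0 < β := by positivity
  set G : (Fin n → ℝ) → ℝ := fun y => F (fun i => (N : ℝ) / (2 * Real.pi) * y i) with hG_def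
  have hGmeas : Measurable G :=
    hFmeas.comp (measurable_pi_lambda _ fun i => (measurable_pi_apply i).const_mul _)
  have hGpos : ∀ y, 0 ≤ G y := fun y => hFpos _
  have hGC : ∀ y, G y ≤ C := fun y => hC _
  have hGsupp : ∀ y : Fin n → ℝ, (∃ i j, β < |y i - y j|) → G y = 0 := by
    rintro y ⟨i, j, hij⟩
    apply hsupp
    refine ⟨i, j, ?_⟩
    have heq : (N : ℝ) / (2 * Real.pi) * y i - (N : ℝ) / (2 * Real.pi) * y j
        = (N : ℝ) / (2 * Real.pi) * (y i - y j) := by ring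
    rw [heq, abs_mul, abs_of_pos (by positivity : (0:ℝ) < (N : ℝ) / (2 * Real.pi))]
    have hsβ : (N : ℝ) / (2 * Real.pi) * β = α := by
      rw [hβ_def]
      field_simp
    calc α = (N : ℝ) / (2 * Real.pi) * β := hsβ.symm
      _ < (N : ℝ) / (2 * Real.pi) * |y i - y j| := by
          exact (mul_lt_mul_iff_right₀ (by positivity)).mpr hij
  set I : ℝ := ∫ y, G y ∂(Measure.pi fun _ : Fin n => ν) with hI_def
  have hsum : ∫ A, Zrv n N F A ∂(haarTN N) = (1 / N : ℝ) * ((N.choose n : ℝ) * I) := by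
    rw [hhaar]
    simp only [Zrv]
    rw [integral_const_mul]
    congr 1
    rw [integral_finset_sum]
    · have hterm : ∀ T ∈ (Finset.powersetCard n (Finset.univ : Finset (Fin N))).attach,
          (∫ A : Fin N → ℝ, F (fun i => (N:ℝ) / (2 * Real.pi) *
              A ((T.1.orderIsoOfFin (Finset.mem_powersetCard.mp T.2).2) i))
            ∂(Measure.pi fun _ : Fin N => ν)) = I := by
        intro T _
        set e : Fin n → Fin N :=
          fun i => ((T.1.orderIsoOfFin (Finset.mem_powersetCard.mp T.2).2) i : Fin N) with he_def
        have he : Function.Injective e := fun a b hab =>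
          (T.1.orderIsoOfFin _).injective (Subtype.coe_injective hab)
        have hφ : Measurable (fun A : Fin N → ℝ => A ∘ e) :=
          measurable_pi_lambda _ fun i => measurable_pi_apply (e i)
        have h := integral_map (μ := Measure.pi fun _ : Fin N => ν) hφ.aemeasurable
          (f := G) hGmeas.aestronglyMeasurable
        rw [map_comp_pi e he ν] at h
        exact h.symm
      rw [Finset.sum_congr rfl hterm, Finset.sum_const, Finset.card_attach,
        Finset.card_powersetCard, Finset.card_univ, Fintype.card_fin, nsmul_eq_mul]
    · intro T _
      refine Integrable.mono' (integrable_const C) ?_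
        (Filter.Eventually.of_forall fun A => ?_)
      · exact (hFmeas.comp (measurable_pi_lambda _ fun i =>
          (measurable_pi_apply _).const_mul _)).aestronglyMeasurable
      · rw [Real.norm_eq_abs, abs_of_nonneg (hFpos _)]
        exact hC _
  have hI : I ≤ C * n * β ^ (n - 1) / (2 * Real.pi) ^ (n - 1) := by
    rw [hI_def, hν]
    exact integral_bound n (by omega) G hGmeas hGpos C hC0 hGC β (2 * Real.pi) hβ hπ hGsupp
  have hZnonneg : 0 ≤ ∫ A, Zrv n N F A ∂(haarTN N) := by
    apply integral_nonneg
    intro A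
    unfold Zrv
    apply mul_nonneg (by positivity)
    exact Finset.sum_nonneg fun T _ => hFpos _
  rw [abs_of_nonneg hZnonneg, hsum]
  have hfact : (n.factorial : ℝ) = n * ((n - 1).factorial : ℝ) := by
    rw_mod_cast [← Nat.mul_factorial_pred (by omega)]
  have hNn : ((N:ℝ)) ^ (n - 1) * N = (N:ℝ) ^ n := by
    rw [← pow_succ, Nat.sub_add_cancel (by omega)]
  have hβpow : β ^ (n - 1) = (2 * Real.pi) ^ (n - 1) * α ^ (n - 1) / (N:ℝ) ^ (n - 1) := by
    rw [hβ_def, div_pow, mul_pow]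
  have hNne : (N:ℝ) ≠ 0 := ne_of_gt hNpos
  have h2πne : ((2 * Real.pi) ^ (n - 1) : ℝ) ≠ 0 := by positivity
  calc (1 / N : ℝ) * ((N.choose n : ℝ) * I)
      ≤ (1 / N : ℝ) * ((N.choose n : ℝ) *
          (C * n * β ^ (n - 1) / (2 * Real.pi) ^ (n - 1))) := by
        apply mul_le_mul_of_nonneg_left _ (by positivity)
        exact mul_le_mul_of_nonneg_left hI (by positivity)
    _ = (N.choose n : ℝ) * (C * n * α ^ (n - 1)) / (N:ℝ) ^ n := by
        rw [hβpow, ← hNn]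
        field_simp
    _ ≤ ((N:ℝ) ^ n / (n.factorial : ℝ)) * (C * n * α ^ (n - 1)) / (N:ℝ) ^ n := by
        apply div_le_div_of_nonneg_right ?_ (by positivity)
        exact mul_le_mul_of_nonneg_right (Nat.choose_le_pow_div n N) (by positivity)
    _ = C * n * α ^ (n - 1) / (n.factorial : ℝ) := by
        have hNnne : ((N:ℝ) ^ n) ≠ 0 := by positivity
        field_simp
    _ = C * α ^ (n - 1) / ((n - 1).factorial : ℝ) := by
        rw [hfact]
        have : ((n:ℝ)) ≠ 0 := by positivity
        have : (((n-1).factorial : ℝ)) ≠ 0 := by positivity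
        field_simp
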